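/- For all γ ∈ (0,1) and all integers β ≥ 2, the Glacier expected delay β/(1-γ) is strictly less than the Avalanche expected delay β + (1 + (2+βγ)(1-γ)^β - (1-γ)^{2β}(1+βγ)) / (γ(1-γ)^β(1-(1-γ)^β)). -/

import Mathlib

/-- For all γ ∈ (0,1) and integers β ≥ 2, the Glacier expected delay β/(1-γ) is strictly
less than the Avalanche expected delay. -/
theorem stmt_8 (γ : ℝ) (hγ : γ ∈ Set.Ioo (0 : ℝ) 1) (β : ℕ) (hβ : 2 ≤ β) :
    (β : ℝ) / (1 - γ)
      < (β : ℝ) + (1 + (2 + (β : ℝ) * γ) * (1 - γ) ^ β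
          - (1 - γ) ^ (2 * β) * (1 + (β : ℝ) * γ))
        / (γ * (1 - γ) ^ β * (1 - (1 - γ) ^ β)) := by
  obtain ⟨hγ0, hγ1⟩ := hγ
  have hq0 : (0:ℝ) < 1 - γ := by linarith
  have hq1 : (1:ℝ) - γ < 1 := by linarith
  have hP0 : (0:ℝ) < (1 - γ) ^ β := pow_pos hq0 β
  have hP1 : (1 - γ) ^ β < 1 := pow_lt_one₀ hq0.le hq1 (by omega)
  have hD : 0 < γ * (1 - γ) ^ β * (1 - (1 - γ) ^ β) := by
    apply mul_pos (mul_pos hγ0 hP0); linarith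
  have h2b : (1 - γ) ^ (2 * β) = (1 - γ) ^ β * (1 - γ) ^ β := by
    rw [two_mul, pow_add]
  have hβR : (2:ℝ) ≤ (β:ℝ) := by exact_mod_cast hβ
  rw [← sub_lt_iff_lt_add', div_sub' hq0.ne', div_lt_div_iff₀ hq0 hD, h2b]
  set P : ℝ := (1 - γ) ^ β with hPdef
  -- goal: (β - β*(1-γ)) * (γ*P*(1-P)) < (1 + (2+βγ)P - P*P*(1+βγ)) * (1-γ)
  -- i.e. βγ²P(1-P) < (1-γ)(1+2P-P² + βγP(1-P))
  rcases le_or_gt γ (1/2) with hhalf | hhalf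
  · -- γ ≤ 1/2, so γ ≤ 1-γ
    nlinarith [mul_pos hP0 (sub_pos.2 hP1), mul_pos hq0 hP0,
      mul_pos (mul_pos hγ0 hP0) (sub_pos.2 hP1),
      mul_nonneg (mul_nonneg (mul_nonneg (by linarith : (0:ℝ) ≤ (β:ℝ)) hγ0.le) hP0.le) (sub_pos.2 hP1).le,
      mul_pos hq0 (mul_pos hP0 (sub_pos.2 hP1))]
  · -- γ > 1/2, so 1-γ < 1/2
    have hqhalf : 1 - γ < 1/2 := by linarith
    have hnat : (β:ℝ) ≤ 2 ^ (β - 1) := by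
      have h1 : β - 1 < 2 ^ (β - 1) := Nat.lt_two_pow_self
      have h2 : β ≤ 2 ^ (β - 1) := by omega
      exact_mod_cast h2
    have hpow : (1 - γ) ^ (β - 1) < (1/2) ^ (β - 1) :=
      pow_lt_pow_left₀ hqhalf hq0.le (by omega)
    have hhalfpow : (β:ℝ) * (1/2) ^ (β - 1) ≤ 1 := by
      have h3 : (0:ℝ) < (2:ℝ) ^ (β - 1) := by positivity
      have : ((1:ℝ)/2) ^ (β - 1) = 1 / 2 ^ (β - 1) := by
        rw [div_pow, one_pow]
      rw [this]
      rw [mul_one_div, div_le_one h3]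
      exact hnat
    have hkey : (β:ℝ) * (1 - γ) ^ (β - 1) < 1 :=
      lt_of_lt_of_le (by nlinarith : (β:ℝ) * (1 - γ) ^ (β - 1) < (β:ℝ) * (1/2) ^ (β - 1)) hhalfpow
    have hPsplit : P = (1 - γ) ^ (β - 1) * (1 - γ) := by
      rw [hPdef, ← pow_succ]
      congr 1
      omega
    have hbp : (β:ℝ) * P < 1 - γ := by
      rw [hPsplit, ← mul_assoc]
      nlinarith
    have hbgp : (β:ℝ) * γ * P < 1 - γ := by nlinarith [pow_pos hq0 (β-1)]
    nlinarith [mul_pos hP0 (sub_pos.2 hP1), mul_pos hq0 hP0,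
      mul_lt_mul_of_pos_right hbgp (mul_pos hγ0 (sub_pos.2 hP1)),
      mul_pos (mul_pos hγ0 hq0) (sub_pos.2 hP1),
      mul_pos hq0 (mul_pos hP0 (sub_pos.2 hP1))]
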